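/- (Maximum principle) Let C > 0, D = √(C/2), h_j = 2·log(D·j + 1), and let {a_j}_{j≥0} be a real sequence with a₀ = 0 satisfying 2a_n − a_{n−1} − a_{n+1} ≤ C·e^{−a_n} for all n ≥ 1. Fix ε ≥ 0 and set b_j = a_j − (1+ε)·h_j. Then {b_j} has no positive local maximum: for every i ≥ 1, if b_i ≥ b_{i−1} and b_i ≥ b_{i+1}, then b_i ≤ 0. -/

import Mathlib

set_option maxHeartbeats 1000000 in
/-- Maximum principle: let `a₀ = 0` and `2a_n - a_{n-1} - a_{n+1} ≤ C e^{-a_n}` for all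
`n ≥ 1`, let `ε ≥ 0`, and set `b_j = a_j - (1+ε) h_j` with `h_j = 2 log(√(C/2) j + 1)`.
Then `b` has no positive local maximum: if `i ≥ 1`, `b_i ≥ b_{i-1}` and `b_i ≥ b_{i+1}`,
then `b_i ≤ 0`. -/
theorem no_positive_local_maximum (C : ℝ) (hC : 0 < C) (a : ℕ → ℝ) (ha0 : a 0 = 0)
    (ha : ∀ n : ℕ, 2 * a (n+1) - a n - a (n+2) ≤ C * Real.exp (-(a (n+1))))
    (ε : ℝ) (hε : 0 ≤ ε) (b : ℕ → ℝ)
    (hb : ∀ j : ℕ, b j = a j - (1 + ε) * (2 * Real.log (Real.sqrt (C / 2) * (j : ℝ) + 1))) :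
    ∀ i : ℕ, b i ≤ b (i+1) → b (i+2) ≤ b (i+1) → b (i+1) ≤ 0 := by
  intro i h1 h2
  by_contra hpos
  push_neg at hpos
  set D := Real.sqrt (C / 2) with hDdef
  have hD : 0 < D := Real.sqrt_pos.2 (by linarith)
  have hD2 : D ^ 2 = C / 2 := Real.sq_sqrt (by linarith)
  set u : ℝ := D * (i : ℝ) + 1 with hu
  set v : ℝ := D * ((i : ℝ) + 1) + 1 with hv
  set w : ℝ := D * ((i : ℝ) + 2) + 1 with hw
  have hu0 : 0 < u := by positivity
  have hv1 : 1 < v := by nlinarith [Nat.cast_nonneg (α := ℝ) i]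
  have hv0 : 0 < v := by linarith
  have hw0 : 0 < w := by positivity
  have huv : u = v - D := by rw [hu, hv]; ring
  have hwv : w = v + D := by rw [hw, hv]; ring
  have huw : u * w = v ^ 2 - D ^ 2 := by rw [huv, hwv]; ring
  have hv2 : (0:ℝ) < v ^ 2 := by positivity
  -- log (u*w) ≤ 2 log v - D²/v²
  have key : Real.log (u * w) ≤ 2 * Real.log v - D ^ 2 / v ^ 2 := by
    have h3 : Real.log (u * w / v ^ 2) ≤ u * w / v ^ 2 - 1 :=
      Real.log_le_sub_one_of_pos (by positivity)
    have h4 : Real.log (u * w / v ^ 2) = Real.log (u * w) - Real.log (v ^ 2) :=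
      Real.log_div (by positivity) (by positivity)
    have h5 : Real.log (v ^ 2) = 2 * Real.log v := by
      rw [Real.log_pow]; push_cast; ring
    have h6 : u * w / v ^ 2 - 1 = - (D ^ 2 / v ^ 2) := by
      field_simp [huw]
      linarith [huw]
    rw [h4, h5, h6] at h3
    linarith
  -- Lh ≥ C e^{-h_{i+1}} = 2D²/v²
  have hLh : 2 * (D ^ 2 / v ^ 2) ≤ 2 * (2 * Real.log v) - 2 * Real.log u - 2 * Real.log w := by
    have := Real.log_mul (ne_of_gt hu0) (ne_of_gt hw0)
    rw [this] at key
    linarith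
  -- local max: (1+ε) Lh ≤ 2a_{i+1} - a_i - a_{i+2}
  have hb1 := hb i
  have hb2 := hb (i + 1)
  have hb3 := hb (i + 2)
  push_cast at hb1 hb2 hb3
  have hlocal : (1 + ε) * (2 * (2 * Real.log v) - 2 * Real.log u - 2 * Real.log w)
      ≤ 2 * a (i + 1) - a i - a (i + 2) := by
    rw [hb1, hb2] at h1
    rw [hb3, hb2] at h2
    linarith [h1, h2]
  -- a_{i+1} > 2 log v
  have hlogv : 0 < Real.log v := Real.log_pos hv1
  have ha1 : 2 * Real.log v < a (i + 1) := by
    rw [hb2] at hpos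
    nlinarith
  -- C e^{-a_{i+1}} < C e^{-2 log v} = C / v² = 2D²/v²
  have hexp : C * Real.exp (-(a (i + 1))) < 2 * (D ^ 2 / v ^ 2) := by
    have h7 : Real.exp (-(a (i + 1))) < Real.exp (-(2 * Real.log v)) :=
      Real.exp_lt_exp.2 (by linarith)
    have h8 : Real.exp (-(2 * Real.log v)) = (v ^ 2)⁻¹ := by
      rw [show (2 : ℝ) * Real.log v = Real.log (v ^ 2) by
        rw [Real.log_pow]; push_cast; ring, Real.exp_neg, Real.exp_log hv2]
    have h9 : C * Real.exp (-(a (i + 1))) < C * (v ^ 2)⁻¹ := by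
      rw [← h8]; exact mul_lt_mul_of_pos_left h7 hC
    have h10 : C * (v ^ 2)⁻¹ = 2 * (D ^ 2 / v ^ 2) := by
      rw [hD2]; field_simp
    linarith
  have hX0 : 0 ≤ 2 * (2 * Real.log v) - 2 * Real.log u - 2 * Real.log w :=
    le_trans (by positivity) hLh
  have hmono : 2 * (D ^ 2 / v ^ 2)
      ≤ (1 + ε) * (2 * (2 * Real.log v) - 2 * Real.log u - 2 * Real.log w) :=
    hLh.trans (le_mul_of_one_le_left hX0 (by linarith))
  have := ha i
  linarith
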